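/- Let G be a finite group, H a cyclic subgroup of G containing the center Z of G, and write H̄ = H/Z and Ḡ = G/Z. Then the quotient group N_{Ḡ}(H̄)/C_{Ḡ}(H̄) is isomorphic to a section (a quotient of a subgroup) of N_G(H)/C_G(H). -/

import Mathlib

instance centralizer_subgroupOf_normalizer_normal {G : Type*} [Group G] (H : Subgroup G) :
    ((Subgroup.centralizer (H : Set G)).subgroupOf (Subgroup.normalizer (H : Set G))).Normal := by
  rw [← Subgroup.normalizerMonoidHom_ker]
  exact MonoidHom.normal_ker _

theorem quotient_weyl_group_is_section {G : Type*} [Group G] [Finite G]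
    (H : Subgroup G) (hcyc : IsCyclic H) (hZ : Subgroup.center G ≤ H) :
    ∃ (K : Subgroup (Subgroup.normalizer (H : Set G) ⧸
        (Subgroup.centralizer (H : Set G)).subgroupOf (Subgroup.normalizer (H : Set G))))
      (f : K →* (Subgroup.normalizer ((H.map (QuotientGroup.mk' (Subgroup.center G))) : Set (G ⧸ Subgroup.center G)) ⧸
        (Subgroup.centralizer ((H.map (QuotientGroup.mk' (Subgroup.center G)) :
            Subgroup (G ⧸ Subgroup.center G)) : Set (G ⧸ Subgroup.center G))).subgroupOf
          (Subgroup.normalizer ((H.map (QuotientGroup.mk' (Subgroup.center G))) : Set (G ⧸ Subgroup.center G))))),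
      Function.Surjective f := by
  classical
  set π := QuotientGroup.mk' (Subgroup.center G) with hπ
  have hker : π.ker = Subgroup.center G := QuotientGroup.ker_mk' _
  have hcomap : Subgroup.comap π (H.map π) = H :=
    Subgroup.comap_map_eq_self (by rw [hker]; exact hZ)
  have hmem : ∀ x : G, π x ∈ H.map π ↔ x ∈ H := by
    intro x
    rw [← Subgroup.mem_comap, hcomap]
  have gmem : ∀ n : G, n ∈ (Subgroup.normalizer (H : Set G)) → π n ∈ (Subgroup.normalizer ((H.map π : Subgroup (G ⧸ Subgroup.center G)) : Set (G ⧸ Subgroup.center G))) := by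
    intro n hn
    rw [Subgroup.mem_normalizer_iff] at hn ⊢
    intro q
    obtain ⟨x, rfl⟩ := QuotientGroup.mk'_surjective (Subgroup.center G) q
    rw [← map_inv, ← map_mul, ← map_mul, hmem, hmem]
    exact hn x
  let φ : (Subgroup.normalizer (H : Set G)) →* (Subgroup.normalizer ((H.map π : Subgroup (G ⧸ Subgroup.center G)) : Set (G ⧸ Subgroup.center G))) :=
    (π.comp (Subgroup.normalizer (H : Set G)).subtype).codRestrict _ (fun n => gmem n n.2)
  have hφsurj : Function.Surjective φ := by
    rintro ⟨q, hq⟩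
    obtain ⟨x, rfl⟩ := QuotientGroup.mk'_surjective (Subgroup.center G) q
    have hx : x ∈ (Subgroup.normalizer (H : Set G)) := by
      rw [Subgroup.mem_normalizer_iff]
      intro y
      rw [Subgroup.mem_normalizer_iff] at hq
      rw [← hmem, ← hmem (x * y * x⁻¹), map_mul, map_mul, map_inv]
      exact hq (π y)
    exact ⟨⟨x, hx⟩, rfl⟩
  let ψ := (QuotientGroup.mk' ((Subgroup.centralizer ((H.map π : Subgroup (G ⧸ Subgroup.center G)) :
      Set (G ⧸ Subgroup.center G))).subgroupOf (Subgroup.normalizer ((H.map π : Subgroup (G ⧸ Subgroup.center G)) : Set (G ⧸ Subgroup.center G))))).comp φ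
  have hψsurj : Function.Surjective ψ :=
    (QuotientGroup.mk'_surjective _).comp hφsurj
  have hkerle : (Subgroup.centralizer (H : Set G)).subgroupOf (Subgroup.normalizer (H : Set G)) ≤ ψ.ker := by
    rintro ⟨n, hn⟩ hc
    have hc' : n ∈ Subgroup.centralizer (H : Set G) := hc
    have : π n ∈ Subgroup.centralizer ((H.map π : Subgroup (G ⧸ Subgroup.center G)) :
        Set (G ⧸ Subgroup.center G)) := by
      rw [Subgroup.mem_centralizer_iff]
      rintro q ⟨x, hx, rfl⟩
      rw [← map_mul, ← map_mul, Subgroup.mem_centralizer_iff.mp hc' x hx]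
    simp only [ψ, MonoidHom.mem_ker, MonoidHom.comp_apply, QuotientGroup.mk'_apply,
      QuotientGroup.eq_one_iff]
    exact this
  let f' := QuotientGroup.lift _ ψ hkerle
  have hf'surj : Function.Surjective f' := by
    intro q
    obtain ⟨n, hn⟩ := hψsurj q
    exact ⟨QuotientGroup.mk n, hn⟩
  refine ⟨⊤, f'.comp (Subgroup.topEquiv).toMonoidHom, ?_⟩
  intro q
  obtain ⟨n, hn⟩ := hf'surj q
  exact ⟨⟨n, trivial⟩, hn⟩
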